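/- Let p be a prime, k ≥ 2 an integer, and f ∈ ℤ[x] not identically zero modulo p. Then N_{p,k}(f) = n_p(f) + Σ_{ζ₀ ∈ ℤ/(p), s(f,ζ₀) ≥ k} p^{k−1} + Σ_{ζ₀ ∈ ℤ/(p), s(f,ζ₀) ∈ {2,…,k−1}} p^{s(f,ζ₀)−1} · N_{p, k−s(f,ζ₀)}( f_{1,ζ₀} ), where the last two sums range over the roots ζ₀ of the mod-p reduction f̃ with s(f,ζ₀) in the indicated ranges. -/

import Mathlib

open Polynomial

/-- `N_{p,k}(f)`: the number of residues `ζ ∈ ℤ/(p^k)` with `f(ζ) ≡ 0 (mod p^k)`. -/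
def Npk (p k : ℕ) (f : Polynomial ℤ) : ℕ :=
  ((Finset.range (p ^ k)).filter fun ζ : ℕ => (p : ℤ) ^ k ∣ f.eval (ζ : ℤ)).card

/-- `s(f,ζ₀) = min_{i ≥ 0} (i + ord_p(f⁽ⁱ⁾(ζ₀)/i!))`, where `f⁽ⁱ⁾(ζ₀)/i!` is the
coefficient of `x^i` in `f(ζ₀+x)`; the minimum ranges over `i` with nonzero coefficient. -/
noncomputable def sVal (p : ℕ) (f : Polynomial ℤ) (ζ₀ : ℤ) : ℕ :=
  sInf {n : ℕ | ∃ i : ℕ, (f.comp (X + C ζ₀)).coeff i ≠ 0 ∧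
    n = i + padicValInt p ((f.comp (X + C ζ₀)).coeff i)}

/-- Coefficientwise exact division of a polynomial by a constant. -/
noncomputable def divC (c : ℤ) (f : Polynomial ℤ) : Polynomial ℤ :=
  f.sum fun n a => C (a / c) * X ^ n

/-- `f_{1,ζ₀}(x) := f(ζ₀ + p·x) / p^{s(f,ζ₀)}`. -/
noncomputable def fOne (p : ℕ) (f : Polynomial ℤ) (ζ₀ : ℤ) : Polynomial ℤ :=
  divC ((p : ℤ) ^ sVal p f ζ₀) (f.comp (C (p : ℤ) * X + C ζ₀))

open Finset

lemma count_split (n m : ℕ) (hn : 0 < n) (Q : ℕ → Prop) [DecidablePred Q] :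
    ((range (n * m)).filter Q).card
      = ∑ z ∈ range n, ((range m).filter fun t => Q (z + n * t)).card := by
  rw [Finset.card_eq_sum_card_fiberwise (f := fun ζ => ζ % n) (t := range n)
    (fun x _ => mem_range.2 (Nat.mod_lt _ hn))]
  refine Finset.sum_congr rfl fun z hz => ?_
  rw [mem_range] at hz
  refine Finset.card_nbij' (fun ζ => ζ / n) (fun t => z + n * t) ?_ ?_ ?_ ?_
  · intro a ha
    simp only [Finset.mem_coe, mem_filter, mem_range] at ha ⊢
    refine ⟨Nat.div_lt_of_lt_mul ?_, ?_⟩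
    · omega
    · have : z + n * (a / n) = a := by
        have := Nat.mod_add_div a n
        omega
      rw [this]; exact ha.1.2
  · intro t ht
    simp only [Finset.mem_coe, mem_filter, mem_range] at ht ⊢
    refine ⟨⟨?_, ht.2⟩, ?_⟩
    · have := ht.1; nlinarith
    · simp [Nat.add_mul_mod_self_left, Nat.mod_eq_of_lt hz]
  · intro a ha
    simp only [Finset.mem_coe, mem_filter, mem_range] at ha
    have := Nat.mod_add_div a n
    simp only []
    omega
  · intro t ht
    simp only [Finset.mem_coe, mem_filter, mem_range] at ht
    simp only []
    rw [Nat.add_mul_div_left _ _ hn, Nat.div_eq_of_lt hz]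
    omega

lemma count_periodic (n m : ℕ) (hn : 0 < n) (Q : ℕ → Prop) [DecidablePred Q]
    (hQ : ∀ t, Q (t + n) ↔ Q t) :
    ((range (n * m)).filter Q).card = m * ((range n).filter Q).card := by
  rw [count_split n m hn Q]
  have key : ∀ z t : ℕ, Q (z + n * t) ↔ Q z := by
    intro z t
    induction t with
    | zero => simp
    | succ t ih => rw [Nat.mul_succ, ← Nat.add_assoc, Nat.add_comm (z + n*t) n]
                   rw [Nat.add_comm n (z + n*t)] at *
                   rw [hQ, ih]
  have : ∀ z ∈ range n, ((range m).filter fun t => Q (z + n * t)).card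
      = if Q z then m else 0 := by
    intro z _
    by_cases h : Q z
    · simp [filter_true_of_mem (fun t _ => (key z t).2 h), h]
    · simp [filter_false_of_mem (fun t _ hq => h ((key z t).1 hq)), h]
  rw [Finset.sum_congr rfl this, ← Finset.sum_filter]
  simp [Finset.sum_const, Nat.mul_comm]

lemma linear_count {p : ℕ} (hp : p.Prime) (a b : ℤ) (hb : ¬ (p:ℤ) ∣ b) :
    ((range p).filter fun t : ℕ => (p:ℤ) ∣ a + t * b).card = 1 := by
  haveI := Fact.mk hp
  set u : ZMod p := (-a) * (b : ZMod p)⁻¹ with hu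
  have hbz : (b : ZMod p) ≠ 0 := by
    rwa [Ne, ZMod.intCast_zmod_eq_zero_iff_dvd]
  rw [Finset.card_eq_one]
  refine ⟨u.val, ?_⟩
  ext t
  simp only [mem_filter, mem_range, mem_singleton]
  constructor
  · rintro ⟨htp, hdvd⟩
    have : ((a + t * b : ℤ) : ZMod p) = 0 := by
      rwa [ZMod.intCast_zmod_eq_zero_iff_dvd]
    push_cast at this
    have ht : (t : ZMod p) = u := by
      rw [hu, eq_mul_inv_iff_mul_eq₀ hbz]
      linear_combination this
    rw [← ht, ZMod.val_natCast, Nat.mod_eq_of_lt htp]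
  · rintro rfl
    refine ⟨ZMod.val_lt u, ?_⟩
    rw [← ZMod.intCast_zmod_eq_zero_iff_dvd]
    push_cast
    rw [ZMod.natCast_val, ZMod.cast_id, hu]
    field_simp
    ring

lemma coeff_comp_C_mul_X (h : Polynomial ℤ) (a : ℤ) (i : ℕ) :
    (h.comp (C a * X)).coeff i = h.coeff i * a ^ i := by
  induction h using Polynomial.induction_on' with
  | add f g hf hg =>
    simp only [add_comp, coeff_add, hf, hg, add_mul]
  | monomial n b =>
    rw [monomial_comp, coeff_monomial, mul_pow, ← C_pow, mul_left_comm, coeff_C_mul,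
      coeff_C_mul, coeff_X_pow]
    by_cases h : n = i
    · subst h; simp; ring
    · simp [h, Ne.symm h]

lemma divC_coeff (c : ℤ) (g : Polynomial ℤ) (n : ℕ) :
    (divC c g).coeff n = g.coeff n / c := by
  rw [divC, Polynomial.sum, finset_sum_coeff]
  simp only [coeff_C_mul, coeff_X_pow, mul_ite, mul_one, mul_zero]
  rw [Finset.sum_ite_eq g.support n (fun m => g.coeff m / c)]
  by_cases h : n ∈ g.support
  · simp [h]
  · simp only [h, if_false]
    rw [Polynomial.notMem_support_iff.1 h]
    simp

lemma C_mul_divC (c : ℤ) (g : Polynomial ℤ) (hdvd : ∀ n, c ∣ g.coeff n) :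
    C c * divC c g = g := by
  ext n
  rw [coeff_C_mul, divC_coeff, Int.mul_ediv_cancel' (hdvd n)]

lemma hensel_step {p : ℕ} (hp : p.Prime) (g : Polynomial ℤ)
    (hg : ∀ t : ℤ, (p:ℤ) ∣ g.eval t → ¬ (p:ℤ) ∣ g.derivative.eval t)
    (j : ℕ) (hj : 1 ≤ j) : Npk p (j+1) g = Npk p j g := by
  have hp0 : (0:ℕ) < p := hp.pos
  have hpz : ((p:ℤ)) ≠ 0 := Int.natCast_ne_zero.mpr hp.pos.ne'
  rw [Npk, Npk, show p^(j+1) = p^j * p from pow_succ p j,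
    count_split (p^j) p (pow_pos hp0 j), Finset.card_filter]
  refine Finset.sum_congr rfl fun r _ => ?_
  by_cases hr : (p:ℤ)^j ∣ g.eval (r:ℤ)
  · rw [if_pos hr]
    set A := g.eval (r:ℤ) with hA'
    set b := g.derivative.eval (r:ℤ) with hb'
    set a := A / (p:ℤ)^j with ha'
    have hA : (p:ℤ)^j * a = A := Int.mul_ediv_cancel' hr
    have hpb : ¬ (p:ℤ) ∣ b :=
      hg r (dvd_trans (dvd_pow_self _ (by omega)) hr)
    have key : ∀ u : ℕ, ((p:ℤ)^(j+1) ∣ g.eval ((r + p^j*u : ℕ):ℤ)) ↔ (p:ℤ) ∣ a + u * b := by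
      intro u
      obtain ⟨E, hE⟩ := g.binomExpansion (r:ℤ) ((p:ℤ)^j * u)
      have hcast : ((r + p^j*u : ℕ):ℤ) = (r:ℤ) + (p:ℤ)^j * u := by push_cast; ring
      rw [hcast, hE]
      have hp2 : ((p:ℤ)^j)^2 = (p:ℤ)^(j+1) * (p:ℤ)^(j-1) := by
        rw [← pow_mul, ← pow_add]; congr 1; omega
      have heq : A + b * ((p:ℤ)^j * u) + E * ((p:ℤ)^j * u)^2
          = (p:ℤ)^j * (a + u*b) + (p:ℤ)^(j+1) * (E * ((p:ℤ)^(j-1) * (u:ℤ)^2)) := by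
        rw [← hA, mul_pow, hp2]; ring
      rw [heq]
      constructor
      · intro hd
        have h3 : (p:ℤ)^(j+1) ∣ (p:ℤ)^j * (a + u*b) := by
          have h4 : (p:ℤ)^(j+1) ∣ (p:ℤ)^(j+1) * (E * ((p:ℤ)^(j-1) * (u:ℤ)^2)) :=
            dvd_mul_right _ _
          have h5 := dvd_sub hd h4
          simpa using h5
        rw [pow_succ] at h3
        exact (mul_dvd_mul_iff_left (pow_ne_zero j hpz)).1 h3
      · intro hd
        apply dvd_add
        · rw [pow_succ]; exact mul_dvd_mul_left _ hd
        · exact dvd_mul_right _ _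
    rw [Finset.filter_congr fun u _ => key u]
    exact linear_count hp a b hpb
  · rw [if_neg hr, Finset.card_eq_zero, Finset.filter_eq_empty_iff]
    intro u _
    intro hdvd
    apply hr
    have h1 : (p:ℤ)^j ∣ g.eval ((r + p^j*u : ℕ):ℤ) :=
      dvd_trans (pow_dvd_pow _ (by omega)) hdvd
    have h2 : (p:ℤ)^j ∣ g.eval ((r + p^j*u : ℕ):ℤ) - g.eval (r:ℤ) :=
      dvd_trans ⟨(u:ℤ), by push_cast; ring⟩ (sub_dvd_eval_sub _ _ g)
    exact (dvd_iff_dvd_of_dvd_sub h2).1 h1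

lemma hensel {p : ℕ} (hp : p.Prime) (g : Polynomial ℤ)
    (hg : ∀ t : ℤ, (p:ℤ) ∣ g.eval t → ¬ (p:ℤ) ∣ g.derivative.eval t) :
    ∀ j, 1 ≤ j → Npk p j g = Npk p 1 g := by
  intro j hj
  induction j, hj using Nat.le_induction with
  | base => rfl
  | succ j hj ih => rw [hensel_step hp g hg j hj, ih]

section Facts
variable {p : ℕ} (hp : p.Prime) (f : Polynomial ℤ) (z : ℤ)

lemma comp_comp_eq : f.comp (C (p:ℤ) * X + C z) = (f.comp (X + C z)).comp (C (p:ℤ) * X) := by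
  rw [comp_assoc, add_comp, X_comp, C_comp]

lemma comp_ne_zero (hf : f ≠ 0) : f.comp (X + C z) ≠ 0 := by
  intro h0
  apply hf
  have h1 : (f.comp (X + C z)).comp (X - C z) = f := by
    rw [comp_assoc, add_comp, X_comp, C_comp,
      show (X : Polynomial ℤ) - C z + C z = X by ring, comp_X]
  rw [h0, zero_comp] at h1
  exact h1.symm

lemma sval_le (i : ℕ) (hi : (f.comp (X + C z)).coeff i ≠ 0) :
    sVal p f z ≤ i + padicValInt p ((f.comp (X + C z)).coeff i) :=
  Nat.sInf_le ⟨i, hi, rfl⟩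

lemma sval_mem (hf : f ≠ 0) : ∃ i : ℕ, (f.comp (X + C z)).coeff i ≠ 0 ∧
    sVal p f z = i + padicValInt p ((f.comp (X + C z)).coeff i) := by
  have hne : (f.comp (X + C z)) ≠ 0 := comp_ne_zero f z hf
  have : sVal p f z ∈ {n : ℕ | ∃ i : ℕ, (f.comp (X + C z)).coeff i ≠ 0 ∧
      n = i + padicValInt p ((f.comp (X + C z)).coeff i)} :=
    Nat.sInf_mem ⟨_, ⟨(f.comp (X + C z)).natDegree,
      Polynomial.leadingCoeff_ne_zero.mpr hne, rfl⟩⟩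
  exact this

lemma padic_one_le (hp : p.Prime) {a : ℤ} (ha : a ≠ 0) (hd : (p:ℤ) ∣ a) :
    1 ≤ padicValInt p a := by
  haveI := Fact.mk hp
  rcases (padicValInt_dvd_iff (p := p) 1 a).1 (by simpa using hd) with h | h
  · exact absurd h ha
  · exact h

lemma padic_eq_zero (hp : p.Prime) {a : ℤ} (ha : ¬ (p:ℤ) ∣ a) :
    padicValInt p a = 0 := by
  haveI := Fact.mk hp
  by_contra h
  exact ha (dvd_trans (dvd_pow_self (p:ℤ) h)
    (padicValInt_dvd a))

lemma coeff_g_dvd (hp : p.Prime) (hf : f ≠ 0) (i : ℕ) :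
    (p:ℤ)^(sVal p f z) ∣ (f.comp (C (p:ℤ) * X + C z)).coeff i := by
  haveI := Fact.mk hp
  rw [comp_comp_eq, coeff_comp_C_mul_X]
  by_cases hc : (f.comp (X + C z)).coeff i = 0
  · rw [hc, zero_mul]; exact dvd_zero _
  · refine dvd_trans (pow_dvd_pow (p:ℤ) (sval_le (p := p) f z i hc)) ?_
    rw [add_comm, pow_add]
    exact mul_dvd_mul_right (padicValInt_dvd _) _

lemma g_fact (hp : p.Prime) (hf : f ≠ 0) :
    f.comp (C (p:ℤ) * X + C z) = C ((p:ℤ)^(sVal p f z)) * fOne p f z :=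
  (C_mul_divC _ _ (coeff_g_dvd f z hp hf)).symm

lemma eval_key (hp : p.Prime) (hf : f ≠ 0) (t : ℤ) :
    f.eval (z + p * t) = (p:ℤ)^(sVal p f z) * (fOne p f z).eval t := by
  have h1 := congrArg (eval t) (g_fact f z hp hf)
  rw [eval_comp] at h1
  simp only [eval_add, eval_mul, eval_C, eval_X] at h1
  rw [add_comm]
  exact h1

lemma coeff0_eq : (f.comp (X + C z)).coeff 0 = f.eval z := by
  rw [← taylor_apply, taylor_coeff_zero]

lemma coeff1_eq : (f.comp (X + C z)).coeff 1 = f.derivative.eval z := by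
  rw [← taylor_apply, taylor_coeff_one]

lemma one_le_sval (hp : p.Prime) (hf : f ≠ 0) (hz : (p:ℤ) ∣ f.eval z) :
    1 ≤ sVal p f z := by
  obtain ⟨i, hci, hi⟩ := sval_mem (p := p) f z hf
  rcases Nat.eq_zero_or_pos i with rfl | hpos
  · rw [coeff0_eq] at hci hi
    have := padic_one_le hp hci hz
    omega
  · omega

lemma sval_eq_one (hp : p.Prime) (hf : f ≠ 0) (hz : (p:ℤ) ∣ f.eval z)
    (hz' : ¬ (p:ℤ) ∣ f.derivative.eval z) : sVal p f z = 1 := by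
  have h1 := one_le_sval f z hp hf hz
  have hc1 : (f.comp (X + C z)).coeff 1 ≠ 0 := by
    rw [coeff1_eq]; intro h0; exact hz' (h0 ▸ dvd_zero _)
  have h2 := sval_le (p := p) f z 1 hc1
  rw [coeff1_eq, padic_eq_zero hp hz'] at h2
  omega

lemma dvd_deriv_of_two_le (hp : p.Prime) (h2 : 2 ≤ sVal p f z) :
    (p:ℤ) ∣ f.derivative.eval z := by
  haveI := Fact.mk hp
  by_cases hc1 : (f.comp (X + C z)).coeff 1 = 0
  · rw [coeff1_eq] at hc1; rw [hc1]; exact dvd_zero _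
  · have h3 := sval_le (p := p) f z 1 hc1
    have h4 : 1 ≤ padicValInt p ((f.comp (X + C z)).coeff 1) := by omega
    rw [coeff1_eq] at *
    exact dvd_trans (dvd_pow_self (p:ℤ) (Nat.one_le_iff_ne_zero.mp h4)) (padicValInt_dvd _)

lemma sval_one_not_dvd (hp : p.Prime) (hf : f ≠ 0) (hz : (p:ℤ) ∣ f.eval z)
    (hs : sVal p f z = 1) (hdeg : (p:ℤ) ∣ f.derivative.eval z) :
    ¬ (p:ℤ) ∣ (f.eval z / p) := by
  haveI := Fact.mk hp
  obtain ⟨i, hci, hi⟩ := sval_mem (p := p) f z hf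
  rw [hs] at hi
  intro hcon
  have hile : i ≤ 1 := by omega
  interval_cases i
  · -- i = 0 : padicValInt = 1
    rw [coeff0_eq] at hci hi
    have h2 : (p:ℤ)^2 ∣ f.eval z := by
      have : f.eval z = (p:ℤ) * (f.eval z / p) := (Int.mul_ediv_cancel' hz).symm
      obtain ⟨c, hc⟩ := hcon
      exact ⟨c, by rw [this, hc]; ring⟩
    have := (padicValInt_dvd_iff (p := p) 2 (f.eval z)).1 h2
    omega
  · -- i = 1 : padicValInt (coeff 1) = 0 but p ∣ coeff1
    rw [coeff1_eq] at hci hi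
    have := padic_one_le hp hci hdeg
    omega

lemma fOne_deriv (hp : p.Prime) (hf : f ≠ 0) (hs : sVal p f z = 1) (t : ℤ) :
    (fOne p f z).derivative.eval t = f.derivative.eval ((p:ℤ) * t + z) := by
  have hg := g_fact f z hp hf
  rw [hs, pow_one] at hg
  have h1 := congrArg derivative hg
  rw [derivative_comp, derivative_C_mul] at h1
  have h2 : derivative (C (p:ℤ) * X + C z) = C (p:ℤ) := by
    simp
  rw [h2] at h1
  have hCp : (C (p:ℤ)) ≠ 0 := by
    simpa using (Int.natCast_ne_zero.mpr hp.pos.ne' : ((p:ℤ)) ≠ 0)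
  have h3 : (f.derivative).comp (C (p:ℤ) * X + C z) = (fOne p f z).derivative :=
    mul_left_cancel₀ hCp h1
  have h4 := congrArg (eval t) h3
  rw [eval_comp] at h4
  simpa using h4.symm

end Facts

lemma main_count {p : ℕ} (hp : p.Prime) (k : ℕ) (hk : 2 ≤ k) (f : Polynomial ℤ)
    (hf : f ≠ 0) (z : ℤ) :
    ((range (p^(k-1))).filter fun t : ℕ => (p:ℤ)^k ∣ f.eval (z + p * t)).card
    = (if (p:ℤ) ∣ f.eval z ∧ ¬ (p:ℤ) ∣ f.derivative.eval z then 1 else 0)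
    + (if (p:ℤ) ∣ f.eval z ∧ k ≤ sVal p f z then p^(k-1) else 0)
    + (if (p:ℤ) ∣ f.eval z ∧ 2 ≤ sVal p f z ∧ sVal p f z ≤ k - 1 then
        p^(sVal p f z - 1) * Npk p (k - sVal p f z) (fOne p f z) else 0) := by
  have hpz : ((p:ℤ)) ≠ 0 := Int.natCast_ne_zero.mpr hp.pos.ne'
  by_cases hz : (p:ℤ) ∣ f.eval z
  · set s := sVal p f z with hs
    have hs1 : 1 ≤ s := one_le_sval f z hp hf hz
    have key : ∀ t : ℤ, f.eval (z + p*t) = (p:ℤ)^s * (fOne p f z).eval t :=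
      eval_key f z hp hf
    rcases le_or_gt k s with hks | hsk
    · -- s ≥ k
      have hd : (p:ℤ) ∣ f.derivative.eval z := dvd_deriv_of_two_le f z hp (by omega)
      rw [if_neg (fun h => h.2 hd), if_pos ⟨hz, hks⟩,
        if_neg (by rintro ⟨-, -, h3⟩; omega)]
      rw [Finset.filter_true_of_mem, card_range]
      · omega
      · intro t _
        rw [key t]
        exact dvd_trans (pow_dvd_pow _ hks) (dvd_mul_right _ _)
    · -- s < k
      have hcount : ((range (p^(k-1))).filter fun t : ℕ => (p:ℤ)^k ∣ f.eval (z + p * t)).card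
          = p^(s-1) * Npk p (k-s) (fOne p f z) := by
        have hcond : ∀ t : ℕ, ((p:ℤ)^k ∣ f.eval (z + p*t)) ↔
            ((p:ℤ)^(k-s) ∣ (fOne p f z).eval t) := by
          intro t
          rw [key t, show (p:ℤ)^k = (p:ℤ)^s * (p:ℤ)^(k-s) by
            rw [← pow_add]; congr 1; omega]
          exact mul_dvd_mul_iff_left (pow_ne_zero s hpz)
        rw [Finset.filter_congr fun t _ => hcond t,
          show p^(k-1) = p^(k-s) * p^(s-1) by rw [← pow_add]; congr 1; omega,
          count_periodic (p^(k-s)) (p^(s-1)) (pow_pos hp.pos _) _ ?_, Npk]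
        intro t
        have hsub : (p:ℤ)^(k-s) ∣ (fOne p f z).eval ((t + p^(k-s) : ℕ):ℤ)
            - (fOne p f z).eval (t:ℤ) := by
          refine dvd_trans ⟨1, by push_cast; ring⟩ (sub_dvd_eval_sub _ _ _)
        exact dvd_iff_dvd_of_dvd_sub hsub
      rw [hcount]
      rcases eq_or_lt_of_le hs1 with hs1' | hs2
      · -- s = 1
        have hlin : ∀ t : ℤ, ∃ E : ℤ, (fOne p f z).eval t
            = (f.eval z / p) + f.derivative.eval z * t + E * p * t^2 := by
          intro t
          obtain ⟨E, hE⟩ := f.binomExpansion z ((p:ℤ) * t)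
          refine ⟨E, mul_left_cancel₀ hpz ?_⟩
          have e1 : (p:ℤ) * (fOne p f z).eval t = f.eval (z + p*t) := by
            rw [key t, ← hs1', pow_one]
          have e2 : f.eval z = p * (f.eval z / p) := (Int.mul_ediv_cancel' hz).symm
          rw [e1, hE]; linear_combination e2
        by_cases hz' : (p:ℤ) ∣ f.derivative.eval z
        · -- degenerate, s = 1 : count is 0
          have hnd : ¬ (p:ℤ) ∣ (f.eval z / p) :=
            sval_one_not_dvd f z hp hf hz hs1'.symm hz'
          have hzero : Npk p (k-s) (fOne p f z) = 0 := by
            rw [Npk, Finset.card_eq_zero, Finset.filter_eq_empty_iff]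
            intro t _ hdd
            obtain ⟨E, hE2⟩ := hlin (t:ℤ)
            have h1 : (p:ℤ) ∣ (fOne p f z).eval (t:ℤ) :=
              dvd_trans (dvd_pow_self _ (by omega)) hdd
            have h5 : (p:ℤ) ∣ f.derivative.eval z * (t:ℤ) + E * p * (t:ℤ)^2 :=
              dvd_add (hz'.mul_right _) ⟨E * (t:ℤ)^2, by ring⟩
            have h6 : (fOne p f z).eval (t:ℤ) - (f.derivative.eval z * (t:ℤ) + E * p * (t:ℤ)^2)
                = f.eval z / p := by rw [hE2]; ring
            have h7 := dvd_sub h1 h5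
            rw [h6] at h7
            exact hnd h7
          rw [hzero, if_neg (fun h => h.2 hz'), if_neg (by rintro ⟨-, h2⟩; omega),
            if_neg (by rintro ⟨-, h2, -⟩; omega)]
          simp
        · -- nondegenerate : count is 1
          have hone : Npk p (k-s) (fOne p f z) = 1 := by
            rw [hensel hp (fOne p f z) ?_ (k-s) (by omega)]
            · rw [Npk]
              have hiff : ∀ t : ℕ, ((p:ℤ)^1 ∣ (fOne p f z).eval (t:ℤ)) ↔
                  ((p:ℤ) ∣ (f.eval z / p) + (t:ℤ) * f.derivative.eval z) := by
                intro t
                rw [pow_one]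
                obtain ⟨E, hE2⟩ := hlin t
                refine dvd_iff_dvd_of_dvd_sub ⟨E * t^2, by rw [hE2]; ring⟩
              rw [Finset.filter_congr fun t _ => hiff t, pow_one]
              exact linear_count hp _ _ hz'
            · intro t hdt hdt'
              rw [fOne_deriv f z hp hf hs1'.symm t] at hdt'
              apply hz'
              have hsub : (p:ℤ) ∣ f.derivative.eval ((p:ℤ)*t + z) - f.derivative.eval z := by
                refine dvd_trans ⟨t, by ring⟩ (sub_dvd_eval_sub _ _ _)
              exact (dvd_iff_dvd_of_dvd_sub hsub).1 hdt'
          rw [hone, if_pos ⟨hz, hz'⟩, if_neg (by rintro ⟨-, h2⟩; omega),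
            if_neg (by rintro ⟨-, h2, -⟩; omega)]
          have h0 : s - 1 = 0 := by omega
          rw [h0, pow_zero]
          omega
      · -- s ≥ 2
        have hd : (p:ℤ) ∣ f.derivative.eval z := dvd_deriv_of_two_le f z hp hs2
        rw [if_neg (fun h => h.2 hd), if_neg (by rintro ⟨-, h2⟩; omega),
          if_pos ⟨hz, hs2, by omega⟩]
        omega
  · rw [if_neg (fun h => hz h.1), if_neg (fun h => hz h.1), if_neg (fun h => hz h.1)]
    rw [Finset.card_eq_zero, Finset.filter_eq_empty_iff]
    intro t _ hdd
    apply hz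
    have h1 : (p:ℤ) ∣ f.eval (z + p*t) := dvd_trans (dvd_pow_self _ (by omega)) hdd
    have h2 : (p:ℤ) ∣ f.eval (z + p*t) - f.eval z := by
      refine dvd_trans ⟨t, by ring⟩ (sub_dvd_eval_sub _ _ _)
    exact (dvd_iff_dvd_of_dvd_sub h2).1 h1

/-- The root-counting recursion: `N_{p,k}(f)` equals the number of non-degenerate roots
of the mod-`p` reduction of `f`, plus `p^{k-1}` for each root `ζ₀` with `s(f,ζ₀) ≥ k`,
plus `p^{s(f,ζ₀)-1}·N_{p,k-s(f,ζ₀)}(f_{1,ζ₀})` for each root with `2 ≤ s(f,ζ₀) ≤ k-1`. -/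
theorem Npk_recursion (p : ℕ) (hp : p.Prime) (k : ℕ) (hk : 2 ≤ k)
    (f : Polynomial ℤ) (hf : f.map (Int.castRingHom (ZMod p)) ≠ 0) :
    Npk p k f =
      ((Finset.range p).filter fun z : ℕ =>
          (p : ℤ) ∣ f.eval (z : ℤ) ∧ ¬ (p : ℤ) ∣ f.derivative.eval (z : ℤ)).card
      + (∑ z ∈ (Finset.range p).filter
            (fun z : ℕ => (p : ℤ) ∣ f.eval (z : ℤ) ∧ k ≤ sVal p f (z : ℤ)),
          p ^ (k - 1))
      + ∑ z ∈ (Finset.range p).filter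
            (fun z : ℕ => (p : ℤ) ∣ f.eval (z : ℤ) ∧
              2 ≤ sVal p f (z : ℤ) ∧ sVal p f (z : ℤ) ≤ k - 1),
          p ^ (sVal p f (z : ℤ) - 1) * Npk p (k - sVal p f (z : ℤ)) (fOne p f (z : ℤ)) := by
  have hf0 : f ≠ 0 := by
    intro h0
    exact hf (by rw [h0, Polynomial.map_zero])
  have hsplit : Npk p k f
      = ∑ z ∈ range p, ((range (p^(k-1))).filter
          fun t : ℕ => (p:ℤ)^k ∣ f.eval ((z:ℤ) + p * t)).card := by
    rw [Npk, show p ^ k = p * p^(k-1) by rw [← pow_succ']; congr 1; omega,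
      count_split p (p^(k-1)) hp.pos]
    refine Finset.sum_congr rfl fun z _ => ?_
    congr 1
  rw [hsplit, Finset.card_filter, Finset.sum_filter, Finset.sum_filter,
    ← Finset.sum_add_distrib, ← Finset.sum_add_distrib]
  exact Finset.sum_congr rfl fun z _ => main_count hp k hk f hf0 (z:ℤ)
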